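/- For every integer n ≥ 3, the vertex 0 is the unique interior vertex of Γ_n and also the unique center vertex of Γ_n; that is, Int(Γ_n) = C(Γ_n) = {0}: the vertex 0 has eccentricity equal to the radius 1 while every other vertex has eccentricity 2, and 0 is the only vertex v such that for every vertex u ≠ v there exists a vertex w ≠ v with d(u,w) = d(u,v) + d(v,w). -/

import Mathlib

/-- The graph Γ_n: distinct vertices u, v ∈ {0,…,2^n−1} are adjacent iff
(u < 2^(n-1) and v < 2^(n-1)), or u = 0, or v = 0. -/
def Gamma (n : ℕ) : SimpleGraph (Fin (2 ^ n)) :=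
  SimpleGraph.fromRel
    (fun u v => (u.val < 2 ^ (n - 1) ∧ v.val < 2 ^ (n - 1)) ∨ u.val = 0 ∨ v.val = 0)

/-- The eccentricity of a vertex: the greatest (shortest-path) distance from it
to any vertex. -/
noncomputable def ecc (n : ℕ) (v : Fin (2 ^ n)) : ℕ :=
  Finset.univ.sup fun u => (Gamma n).dist v u

/-- A vertex v is an interior vertex if for every vertex u ≠ v there exists a vertex
w ≠ v such that v lies between u and w, i.e. d(u,w) = d(u,v) + d(v,w). -/
def IsInterior (n : ℕ) (v : Fin (2 ^ n)) : Prop :=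
  ∀ u : Fin (2 ^ n), u ≠ v → ∃ w : Fin (2 ^ n), w ≠ v ∧
    (Gamma n).dist u w = (Gamma n).dist u v + (Gamma n).dist v w

lemma gamma_adj {n : ℕ} (u v : Fin (2 ^ n)) :
    (Gamma n).Adj u v ↔ u ≠ v ∧
      ((u.val < 2 ^ (n - 1) ∧ v.val < 2 ^ (n - 1)) ∨ u.val = 0 ∨ v.val = 0) := by
  simp only [Gamma, SimpleGraph.fromRel_adj]
  tauto

lemma adj_zero {n : ℕ} (v : Fin (2 ^ n)) (hv : v.val ≠ 0) :
    (Gamma n).Adj ⟨0, Nat.two_pow_pos n⟩ v := by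
  rw [gamma_adj]
  exact ⟨fun h => hv (by rw [← h]), Or.inr (Or.inl rfl)⟩

lemma gamma_dist_zero {n : ℕ} (v : Fin (2 ^ n)) (hv : v.val ≠ 0) :
    (Gamma n).dist ⟨0, Nat.two_pow_pos n⟩ v = 1 :=
  SimpleGraph.dist_eq_one_iff_adj.mpr (adj_zero v hv)

lemma dist_le_two {n : ℕ} (u v : Fin (2 ^ n)) : (Gamma n).dist u v ≤ 2 := by
  by_cases h : u = v
  · simp [h, SimpleGraph.dist_self]
  by_cases hu : u.val = 0
  · have : u = ⟨0, Nat.two_pow_pos n⟩ := Fin.ext hu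
    subst this
    calc (Gamma n).dist _ v = 1 := gamma_dist_zero v (fun hv => h (Fin.ext hv).symm)
    _ ≤ 2 := by norm_num
  by_cases hv : v.val = 0
  · have : v = ⟨0, Nat.two_pow_pos n⟩ := Fin.ext hv
    subst this
    rw [SimpleGraph.dist_comm]
    calc (Gamma n).dist _ u = 1 := gamma_dist_zero u hu
    _ ≤ 2 := by norm_num
  · have a1 : (Gamma n).Adj u ⟨0, Nat.two_pow_pos n⟩ := ((adj_zero u hu)).symm
    have a2 : (Gamma n).Adj ⟨0, Nat.two_pow_pos n⟩ v := adj_zero v hv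
    have := SimpleGraph.dist_le (a1.toWalk.append a2.toWalk)
    exact le_trans this (le_of_eq rfl)

lemma dist_eq_two {n : ℕ} (u v : Fin (2 ^ n)) (hne : u ≠ v) (hnadj : ¬ (Gamma n).Adj u v)
    (hu : u.val ≠ 0) (hv : v.val ≠ 0) : (Gamma n).dist u v = 2 := by
  have hr : (Gamma n).Reachable u v :=
    (((adj_zero u hu).symm.toWalk.append (adj_zero v hv).toWalk)).reachable
  have h0 : 0 < (Gamma n).dist u v := hr.pos_dist_of_ne hne
  have h1 : (Gamma n).dist u v ≠ 1 := fun h => hnadj (SimpleGraph.dist_eq_one_iff_adj.mp h)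
  have h2 := dist_le_two u v
  omega

lemma far_vertex {n : ℕ} (hn : 3 ≤ n) (v : Fin (2 ^ n)) (hv : v.val ≠ 0) :
    ∃ w : Fin (2 ^ n), w.val ≠ 0 ∧ (Gamma n).dist v w = 2 := by
  have hpow : 2 ^ (n - 1) < 2 ^ n := Nat.pow_lt_pow_right (by norm_num) (by omega)
  have h4 : 4 ≤ 2 ^ (n - 1) := by
    calc (4 : ℕ) = 2 ^ 2 := by norm_num
    _ ≤ 2 ^ (n - 1) := Nat.pow_le_pow_right (by norm_num) (by omega)
  by_cases hvh : v.val < 2 ^ (n - 1)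
  · refine ⟨⟨2 ^ (n - 1), hpow⟩, by simp, ?_⟩
    refine dist_eq_two _ _ ?_ ?_ hv (by simp)
    · intro h; rw [h] at hvh; simp at hvh
    · rw [gamma_adj]; rintro ⟨-, (⟨-, hlt⟩ | h0 | h0)⟩
      · simp at hlt
      · exact hv h0
      · simp at h0
  · refine ⟨⟨1, by omega⟩, by simp, ?_⟩
    refine dist_eq_two _ _ ?_ ?_ hv (by simp)
    · intro h; rw [h] at hv hvh; simp at hvh; omega
    · rw [gamma_adj]; rintro ⟨-, (⟨hlt, -⟩ | h0 | h0)⟩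
      · exact hvh hlt
      · exact hv h0
      · simp at h0

lemma ecc_zero {n : ℕ} (hn : 3 ≤ n) : ecc n ⟨0, Nat.two_pow_pos n⟩ = 1 := by
  have h1 : (1 : ℕ) < 2 ^ n := by
    calc (1:ℕ) < 2 ^ 3 := by norm_num
    _ ≤ 2 ^ n := Nat.pow_le_pow_right (by norm_num) hn
  apply le_antisymm
  · apply Finset.sup_le
    intro u _
    by_cases hu : u.val = 0
    · have : u = ⟨0, Nat.two_pow_pos n⟩ := Fin.ext hu
      simp [this, SimpleGraph.dist_self]
    · exact le_of_eq (gamma_dist_zero u hu)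
  · calc (1:ℕ) = (Gamma n).dist ⟨0, Nat.two_pow_pos n⟩ ⟨1, h1⟩ :=
        (gamma_dist_zero (⟨1, h1⟩ : Fin (2 ^ n)) (by simp)).symm
    _ ≤ _ := Finset.le_sup (f := fun u => (Gamma n).dist ⟨0, Nat.two_pow_pos n⟩ u)
        (Finset.mem_univ _)

lemma ecc_ne_zero {n : ℕ} (hn : 3 ≤ n) (v : Fin (2 ^ n)) (hv : v.val ≠ 0) :
    ecc n v = 2 := by
  apply le_antisymm
  · exact Finset.sup_le fun u _ => dist_le_two v u
  · obtain ⟨w, -, hw⟩ := far_vertex hn v hv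
    calc (2:ℕ) = (Gamma n).dist v w := hw.symm
    _ ≤ _ := Finset.le_sup (f := fun u => (Gamma n).dist v u) (Finset.mem_univ w)


/-- For every n ≥ 3, the vertex 0 is the unique interior vertex and the unique center
vertex of Γ_n: 0 has eccentricity equal to the radius 1, every other vertex has
eccentricity 2, Int(Γ_n) = C(Γ_n) = {0}. -/
theorem stmt_18 (n : ℕ) (hn : 3 ≤ n) :
    ecc n ⟨0, Nat.two_pow_pos n⟩ = 1 ∧
    sInf (Set.range (ecc n)) = 1 ∧
    (∀ v : Fin (2 ^ n), v.val ≠ 0 → ecc n v = 2) ∧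
    {v : Fin (2 ^ n) | ecc n v = sInf (Set.range (ecc n))}
      = {(⟨0, Nat.two_pow_pos n⟩ : Fin (2 ^ n))} ∧
    {v : Fin (2 ^ n) | IsInterior n v}
      = {(⟨0, Nat.two_pow_pos n⟩ : Fin (2 ^ n))} := by
  have hsinf : sInf (Set.range (ecc n)) = 1 := by
    apply le_antisymm
    · exact Nat.sInf_le ⟨_, ecc_zero hn⟩
    · apply le_csInf (Set.range_nonempty _)
      rintro b ⟨v, rfl⟩
      by_cases hv : v.val = 0
      · rw [(Fin.ext hv : v = ⟨0, Nat.two_pow_pos n⟩), ecc_zero hn]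
      · rw [ecc_ne_zero hn v hv]; omega
  refine ⟨ecc_zero hn, hsinf, fun v hv => ecc_ne_zero hn v hv, ?_, ?_⟩
  · ext v
    simp only [Set.mem_setOf_eq, hsinf, Set.mem_singleton_iff]
    constructor
    · intro h
      by_contra hne
      have hv : v.val ≠ 0 := fun h0 => hne (Fin.ext h0)
      rw [ecc_ne_zero hn v hv] at h; omega
    · rintro rfl; exact ecc_zero hn
  · ext v
    simp only [Set.mem_setOf_eq, Set.mem_singleton_iff]
    constructor
    · intro hint
      by_contra hne
      have hv : v.val ≠ 0 := fun h0 => hne (Fin.ext h0)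
      obtain ⟨w, hwv, hdw⟩ := hint ⟨0, Nat.two_pow_pos n⟩ (fun h => hv (by rw [← h]))
      have h1 : (Gamma n).dist ⟨0, Nat.two_pow_pos n⟩ v = 1 := gamma_dist_zero v hv
      have hle : (Gamma n).dist ⟨0, Nat.two_pow_pos n⟩ w ≤ 1 := by
        by_cases hw : w.val = 0
        · rw [(Fin.ext hw : w = ⟨0, Nat.two_pow_pos n⟩)] at hwv ⊢; simp [SimpleGraph.dist_self]
        · exact le_of_eq (gamma_dist_zero w hw)
      have hpos : 0 < (Gamma n).dist v w := by
        have hr : (Gamma n).Reachable v w := by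
          by_cases hw : w.val = 0
          · rw [(Fin.ext hw : w = ⟨0, Nat.two_pow_pos n⟩)]; exact ((adj_zero v hv).symm).reachable
          · exact (((adj_zero v hv).symm.toWalk.append (adj_zero w hw).toWalk)).reachable
        exact hr.pos_dist_of_ne (fun h => hwv h.symm)
      omega
    · rintro rfl u hu
      have hv : u.val ≠ 0 := fun h0 => hu (Fin.ext h0)
      obtain ⟨w, hw0, hdw⟩ := far_vertex hn u hv
      refine ⟨w, fun h => hw0 (by rw [h]), ?_⟩
      rw [hdw, SimpleGraph.dist_comm, gamma_dist_zero u hv, gamma_dist_zero w hw0]
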